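/- arXiv:2406.10545 — 5 statements merged into one kernel-verified Lean document; each statement's English description precedes it below -/
import Mathlib

section
/- Let G be a linearly ordered abelian group and let S₁, S₂ both be final segments of G. Then 𝒢(S₁ + S₂) = 𝒢(S₁) + 𝒢(S₂), and this equals the larger of the two subgroups 𝒢(S₁), 𝒢(S₂) (which are comparable under inclusion). -/
open Pointwise

/-- A final segment of a linearly ordered abelian group: a nonempty proper
upward-closed subset. -/
def IsFinalSegment {G : Type*} [AddCommGroup G] [LinearOrder G] [IsOrderedAddMonoid G] (S : Set G) : Prop :=
  S.Nonempty ∧ S ≠ Set.univ ∧ ∀ a ∈ S, ∀ b, a ≤ b → b ∈ S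

/-- The invariance group of a subset `M`: `𝒢(M) = {γ | M + γ = M}`. -/
def invGrp {G : Type*} [AddCommGroup G] [LinearOrder G] [IsOrderedAddMonoid G] (M : Set G) : Set G :=
  {γ | (fun m => m + γ) '' M = M}

section Aux

variable {G : Type*} [AddCommGroup G] [LinearOrder G] [IsOrderedAddMonoid G]

lemma invGrp_mem_iff {M : Set G} {γ : G} : γ ∈ invGrp M ↔ M + {γ} = M := by
  rw [Set.add_singleton]; exact Iff.rfl

lemma invGrp_zero (M : Set G) : (0 : G) ∈ invGrp M := by
  rw [invGrp_mem_iff]; simp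

lemma invGrp_neg {M : Set G} {γ : G} (h : γ ∈ invGrp M) : -γ ∈ invGrp M := by
  rw [invGrp_mem_iff] at h ⊢
  calc M + {-γ} = (M + {γ}) + {-γ} := by rw [h]
    _ = M + ({γ} + {-γ}) := by rw [add_assoc]
    _ = M := by rw [Set.singleton_add_singleton, add_neg_cancel, Set.add_singleton]; simp

lemma invGrp_add_mem {M : Set G} {γ δ : G} (hγ : γ ∈ invGrp M) (hδ : δ ∈ invGrp M) :
    γ + δ ∈ invGrp M := by
  rw [invGrp_mem_iff] at hγ hδ ⊢
  calc M + {γ + δ} = M + ({γ} + {δ}) := by rw [Set.singleton_add_singleton]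
    _ = (M + {γ}) + {δ} := by rw [add_assoc]
    _ = M := by rw [hγ, hδ]

/-- Membership in the invariance group of an upward-closed set, for `0 ≤ γ`. -/
lemma invGrp_mem_iff_of_upward {S : Set G} (hS : ∀ a ∈ S, ∀ b, a ≤ b → b ∈ S)
    {γ : G} (hγ : 0 ≤ γ) : γ ∈ invGrp S ↔ ∀ s ∈ S, s - γ ∈ S := by
  constructor
  · intro h s hs
    have : s ∈ (fun m => m + γ) '' S := by rw [show (fun m => m + γ) '' S = S from h]; exact hs
    obtain ⟨t, ht, hts⟩ := this
    have hts' : t + γ = s := hts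
    have : t = s - γ := eq_sub_of_add_eq hts'
    rwa [← this]
  · intro h
    show (fun m => m + γ) '' S = S
    apply Set.Subset.antisymm
    · rintro x ⟨s, hs, rfl⟩
      exact hS s hs (s + γ) (le_add_of_nonneg_right hγ)
    · intro s hs
      exact ⟨s - γ, h s hs, show s - γ + γ = s by abel⟩

lemma invGrp_left_subset {S₁ S₂ : Set G} : invGrp S₁ ⊆ invGrp (S₁ + S₂) := by
  intro γ hγ
  rw [invGrp_mem_iff] at hγ ⊢
  calc (S₁ + S₂) + {γ} = (S₁ + {γ}) + S₂ := by
        rw [add_right_comm]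
    _ = S₁ + S₂ := by rw [hγ]

lemma invGrp_right_subset {S₁ S₂ : Set G} : invGrp S₂ ⊆ invGrp (S₁ + S₂) := by
  rw [add_comm S₁ S₂]; exact invGrp_left_subset

lemma sum_upward {S₁ S₂ : Set G} (h₂ : ∀ a ∈ S₂, ∀ b, a ≤ b → b ∈ S₂) :
    ∀ a ∈ S₁ + S₂, ∀ b, a ≤ b → b ∈ S₁ + S₂ := by
  rintro a ⟨x, hx, y, hy, rfl⟩ b hb
  refine ⟨x, hx, b - x, h₂ y hy _ ?_, show x + (b - x) = b by abel⟩
  have := sub_le_sub_right hb x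
  simpa [add_sub_cancel_left] using this

/-- Key step: a nonnegative element of `𝒢(S₁+S₂)` lies in `𝒢(S₁)` or `𝒢(S₂)`. -/
lemma invGrp_sum_mem_or {S₁ S₂ : Set G}
    (h₁ : ∀ a ∈ S₁, ∀ b, a ≤ b → b ∈ S₁) (h₂ : ∀ a ∈ S₂, ∀ b, a ≤ b → b ∈ S₂)
    {γ : G} (hγ : 0 ≤ γ) (h : γ ∈ invGrp (S₁ + S₂)) :
    γ ∈ invGrp S₁ ∨ γ ∈ invGrp S₂ := by
  by_contra hc
  push_neg at hc
  obtain ⟨hc₁, hc₂⟩ := hc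
  rw [invGrp_mem_iff_of_upward h₁ hγ] at hc₁
  rw [invGrp_mem_iff_of_upward h₂ hγ] at hc₂
  push_neg at hc₁ hc₂
  obtain ⟨s₁, hs₁, hns₁⟩ := hc₁
  obtain ⟨s₂, hs₂, hns₂⟩ := hc₂
  have h2γ : γ + γ ∈ invGrp (S₁ + S₂) := invGrp_add_mem h h
  have h2γ' := (invGrp_mem_iff_of_upward (sum_upward h₂) (add_nonneg hγ hγ)).mp h2γ
  have hmem : s₁ + s₂ - (γ + γ) ∈ S₁ + S₂ := h2γ' _ ⟨s₁, hs₁, s₂, hs₂, rfl⟩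
  obtain ⟨t₁, ht₁, t₂, ht₂, hsum⟩ := hmem
  have hsum' : t₁ + t₂ = s₁ + s₂ - (γ + γ) := hsum
  have hlt₁ : s₁ - γ < t₁ := by
    by_contra hle
    push_neg at hle
    exact hns₁ (h₁ t₁ ht₁ _ hle)
  have hlt₂ : s₂ - γ < t₂ := by
    by_contra hle
    push_neg at hle
    exact hns₂ (h₂ t₂ ht₂ _ hle)
  have : (s₁ - γ) + (s₂ - γ) < t₁ + t₂ := add_lt_add hlt₁ hlt₂
  rw [hsum'] at this
  have heq : (s₁ - γ) + (s₂ - γ) = s₁ + s₂ - (γ + γ) := by abel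
  rw [heq] at this
  exact lt_irrefl _ this

lemma invGrp_sum_eq_union {S₁ S₂ : Set G}
    (h₁ : ∀ a ∈ S₁, ∀ b, a ≤ b → b ∈ S₁) (h₂ : ∀ a ∈ S₂, ∀ b, a ≤ b → b ∈ S₂) :
    invGrp (S₁ + S₂) = invGrp S₁ ∪ invGrp S₂ := by
  apply Set.Subset.antisymm
  · intro γ hγ
    rcases le_total 0 γ with h0 | h0
    · exact invGrp_sum_mem_or h₁ h₂ h0 hγ
    · have : -γ ∈ invGrp S₁ ∨ -γ ∈ invGrp S₂ :=
        invGrp_sum_mem_or h₁ h₂ (neg_nonneg.mpr h0) (invGrp_neg hγ)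
      rcases this with h | h
      · exact Or.inl (by simpa using invGrp_neg h)
      · exact Or.inr (by simpa using invGrp_neg h)
  · intro γ hγ
    rcases hγ with h | h
    · exact invGrp_left_subset h
    · exact invGrp_right_subset h

end Aux

/-- For final segments `S₁, S₂`, `𝒢(S₁ + S₂) = 𝒢(S₁) + 𝒢(S₂) = 𝒢(S₁) ∪ 𝒢(S₂)`
(the larger of the two comparable invariance groups). -/
theorem invGrp_add_finalSegments {G : Type*} [AddCommGroup G] [LinearOrder G] [IsOrderedAddMonoid G]
    (S₁ S₂ : Set G) (h₁ : IsFinalSegment S₁) (h₂ : IsFinalSegment S₂) :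
    invGrp (S₁ + S₂) = invGrp S₁ + invGrp S₂ ∧
    invGrp (S₁ + S₂) = invGrp S₁ ∪ invGrp S₂ ∧
    (invGrp S₁ ⊆ invGrp S₂ ∨ invGrp S₂ ⊆ invGrp S₁) := by
  obtain ⟨-, -, hup₁⟩ := h₁
  obtain ⟨-, -, hup₂⟩ := h₂
  have hunion : invGrp (S₁ + S₂) = invGrp S₁ ∪ invGrp S₂ := invGrp_sum_eq_union hup₁ hup₂
  have hsum : invGrp (S₁ + S₂) = invGrp S₁ + invGrp S₂ := by
    apply Set.Subset.antisymm
    · rw [hunion]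
      rintro γ (h | h)
      · exact ⟨γ, h, 0, invGrp_zero S₂, by simp⟩
      · exact ⟨0, invGrp_zero S₁, γ, h, by simp⟩
    · rintro γ ⟨a, ha, b, hb, rfl⟩
      exact invGrp_add_mem (invGrp_left_subset ha) (invGrp_right_subset hb)
  refine ⟨hsum, hunion, ?_⟩
  by_contra hc
  push_neg at hc
  obtain ⟨a, ha₁, ha₂⟩ := Set.not_subset.mp hc.1
  obtain ⟨b, hb₂, hb₁⟩ := Set.not_subset.mp hc.2
  have hab : a + b ∈ invGrp S₁ ∪ invGrp S₂ := by
    rw [← hunion]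
    exact invGrp_add_mem (invGrp_left_subset ha₁) (invGrp_right_subset hb₂)
  rcases hab with h | h
  · have : b ∈ invGrp S₁ := by
      have := invGrp_add_mem (invGrp_neg ha₁) h
      simpa using this
    exact hb₁ this
  · have : a ∈ invGrp S₂ := by
      have := invGrp_add_mem h (invGrp_neg hb₂)
      simpa [add_assoc] using this
    exact ha₂ this
end

section
/- Let G be a linearly ordered abelian group and S a final segment of G. Then 𝒢(S) is the largest subgroup H of G satisfying H ∩ (S − Sᶜ) = ∅, and moreover S − Sᶜ = {γ ∈ G : γ > 0} \ 𝒢(S) = 𝒢(S)⁺. -/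
open Pointwise

lemma mem_invGrp_iff {G : Type*} [AddCommGroup G] [LinearOrder G] [IsOrderedAddMonoid G] {S : Set G} {γ : G} :
    γ ∈ invGrp S ↔ ∀ a : G, a + γ ∈ S ↔ a ∈ S := by
  constructor
  · intro h a
    constructor
    · intro ha
      rw [← h] at ha
      obtain ⟨m, hm, hme⟩ := ha
      have : m = a := by
        have := hme
        simpa using add_right_cancel this
      rwa [← this]
    · intro ha
      rw [← h]
      exact ⟨a, ha, rfl⟩
  · intro h
    ext x
    constructor
    · rintro ⟨m, hm, rfl⟩
      exact (h m).mpr hm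
    · intro hx
      refine ⟨x - γ, ?_, by simp⟩
      have := (h (x - γ)).mp
      simp at this
      exact this hx

lemma sub_compl_pos {G : Type*} [AddCommGroup G] [LinearOrder G] [IsOrderedAddMonoid G] {S : Set G}
    (hS : IsFinalSegment S) {γ : G} (h : γ ∈ S - Sᶜ) : 0 < γ := by
  obtain ⟨a, ha, b, hb, rfl⟩ := h
  by_contra hle
  push_neg at hle
  exact hb (hS.2.2 a ha b (sub_nonpos.mp hle))

lemma invGrp_disj {G : Type*} [AddCommGroup G] [LinearOrder G] [IsOrderedAddMonoid G] {S : Set G}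
    {γ : G} (hγ : γ ∈ invGrp S) : γ ∉ S - Sᶜ := by
  rintro ⟨a, ha, b, hb, rfl⟩
  apply hb
  have hγ' : a - b ∈ invGrp S := hγ
  have h := mem_invGrp_iff.mp hγ' b
  have he : b + (a - b) = a := by abel
  rw [he] at h
  exact h.mp ha

lemma pos_not_mem_invGrp {G : Type*} [AddCommGroup G] [LinearOrder G] [IsOrderedAddMonoid G] {S : Set G}
    (hS : IsFinalSegment S) {γ : G} (hpos : 0 < γ) (hγ : γ ∉ invGrp S) :
    γ ∈ S - Sᶜ := by
  rw [mem_invGrp_iff] at hγ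
  push_neg at hγ
  obtain ⟨a, ha⟩ := hγ
  rcases ha with ⟨h1, h2⟩ | ⟨h1, h2⟩
  · exact ⟨a + γ, h1, a, h2, add_sub_cancel_left a γ⟩
  · exact absurd (hS.2.2 a h2 (a + γ) (le_add_of_nonneg_right hpos.le)) h1

/-- For a final segment `S` of `G`: the invariance group `𝒢(S)` is the largest subgroup
`H` of `G` with `H ∩ (S - Sᶜ) = ∅`; moreover `S - Sᶜ = {γ | 0 < γ} \ 𝒢(S) = 𝒢(S)⁺`. -/
theorem invGrp_largest_disjoint_subgroup {G : Type*} [AddCommGroup G] [LinearOrder G] [IsOrderedAddMonoid G]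
    (S : Set G) (hS : IsFinalSegment S) :
    (∃ H : AddSubgroup G, (H : Set G) = invGrp S) ∧
    invGrp S ∩ (S - Sᶜ) = ∅ ∧
    (∀ H : AddSubgroup G, (H : Set G) ∩ (S - Sᶜ) = ∅ → (H : Set G) ⊆ invGrp S) ∧
    S - Sᶜ = {γ : G | 0 < γ} \ invGrp S ∧
    S - Sᶜ = {γ : G | ∀ h ∈ invGrp S, h < γ} := by
  have zero_mem : (0 : G) ∈ invGrp S := mem_invGrp_iff.mpr (by simp)
  have neg_mem : ∀ {γ : G}, γ ∈ invGrp S → -γ ∈ invGrp S := by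
    intro γ hγ
    rw [mem_invGrp_iff] at hγ ⊢
    intro a
    have := hγ (a + -γ)
    simp only [neg_add_cancel_right] at this
    exact this.symm
  have add_mem : ∀ {γ δ : G}, γ ∈ invGrp S → δ ∈ invGrp S → γ + δ ∈ invGrp S := by
    intro γ δ hγ hδ
    rw [mem_invGrp_iff] at hγ hδ ⊢
    intro a
    rw [← add_assoc, hδ (a + γ), hγ a]
  refine ⟨⟨⟨⟨⟨invGrp S, fun ha hb => add_mem ha hb⟩, zero_mem⟩,
      fun ha => neg_mem ha⟩, rfl⟩, ?_, ?_, ?_, ?_⟩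
  · ext γ
    simp only [Set.mem_inter_iff, Set.mem_empty_iff_false, iff_false, not_and]
    exact fun h => invGrp_disj h
  · intro H hH h hh
    rcases lt_trichotomy h 0 with hlt | heq | hgt
    · have hnh : -h ∈ (H : Set G) := H.neg_mem hh
      have : -h ∉ S - Sᶜ := fun hmem => by
        have : -h ∈ (H : Set G) ∩ (S - Sᶜ) := ⟨hnh, hmem⟩
        rw [hH] at this; exact this
      have : -h ∈ invGrp S := by
        by_contra hc
        exact this (pos_not_mem_invGrp hS (neg_pos.mpr hlt) hc)
      simpa using neg_mem this
    · rw [heq]; exact zero_mem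
    · have : h ∉ S - Sᶜ := fun hmem => by
        have : h ∈ (H : Set G) ∩ (S - Sᶜ) := ⟨hh, hmem⟩
        rw [hH] at this; exact this
      by_contra hc
      exact this (pos_not_mem_invGrp hS hgt hc)
  · ext γ
    simp only [Set.mem_diff, Set.mem_setOf_eq]
    constructor
    · intro h
      exact ⟨sub_compl_pos hS h, fun hg => invGrp_disj hg h⟩
    · rintro ⟨hpos, hni⟩
      exact pos_not_mem_invGrp hS hpos hni
  · ext γ
    simp only [Set.mem_setOf_eq]
    constructor
    · intro hγ h hmem
      by_contra hle
      push_neg at hle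
      -- γ ≤ h, γ > 0; show γ ∈ invGrp S by convexity, contradicting hγ
      have hpos : 0 < γ := sub_compl_pos hS hγ
      have hconv : γ ∈ invGrp S := by
        rw [mem_invGrp_iff]
        intro a
        constructor
        · intro haγ
          have hah : a + h ∈ S := hS.2.2 (a + γ) haγ (a + h) (add_le_add_right hle a)
          exact (mem_invGrp_iff.mp hmem a).mp hah
        · intro ha
          exact hS.2.2 a ha (a + γ) (le_add_of_nonneg_right hpos.le)
      exact invGrp_disj hconv hγ
    · intro h
      have hpos : 0 < γ := h 0 zero_mem
      have hni : γ ∉ invGrp S := fun hg => lt_irrefl γ (h γ hg)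
      exact pos_not_mem_invGrp hS hpos hni
end

section
/- Let G be a linearly ordered abelian group, and S₁, S₂ nonprincipal final segments of G with trivial invariance groups 𝒢(S₁) = 𝒢(S₂) = {0}. Then S₁ + (S₂ − S₁ᶜ) = S₂, where S₂ − S₁ᶜ := {a − b : a ∈ S₂, b ∈ S₁ᶜ}. -/
open Pointwise

/-- If `S₁, S₂` are nonprincipal final segments with trivial invariance groups, then
`S₁ + (S₂ - S₁ᶜ) = S₂`. -/
theorem add_sub_compl_eq {G : Type*} [AddCommGroup G] [LinearOrder G] [IsOrderedAddMonoid G]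
    (S₁ S₂ : Set G) (h₁ : IsFinalSegment S₁) (h₂ : IsFinalSegment S₂)
    (hnp₁ : ∀ t ∈ S₁, ∃ s ∈ S₁, s < t) (hnp₂ : ∀ t ∈ S₂, ∃ s ∈ S₂, s < t)
    (hg₁ : invGrp S₁ = {0}) (hg₂ : invGrp S₂ = {0}) :
    S₁ + (S₂ - S₁ᶜ) = S₂ := by
  obtain ⟨hne₁, hpr₁, hup₁⟩ := h₁
  obtain ⟨hne₂, hpr₂, hup₂⟩ := h₂
  ext c
  constructor
  · rintro ⟨s, hs, x, ⟨a, ha, b, hb, rfl⟩, rfl⟩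
    have hbs : b < s := lt_of_not_ge fun h => hb (hup₁ s hs b h)
    have key : s + (a - b) = a + (s - b) := by abel
    have : a ≤ s + (a - b) := by
      rw [key]
      exact le_add_of_nonneg_right (sub_nonneg.mpr hbs.le)
    exact hup₂ a ha _ this
  · intro hc
    obtain ⟨a, ha, hac⟩ := hnp₂ c hc
    have hδ : 0 < c - a := sub_pos.mpr hac
    have hex : ∃ b, b ∉ S₁ ∧ b + (c - a) ∈ S₁ := by
      by_contra h
      push_neg at h
      have hmem : -(c - a) ∈ invGrp S₁ := by
        show (fun m => m + -(c - a)) '' S₁ = S₁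
        ext x
        constructor
        · rintro ⟨y, hy, rfl⟩
          by_contra hx
          have he : y + -(c - a) + (c - a) = y := by abel
          refine h _ hx ?_
          show y + -(c - a) + (c - a) ∈ S₁
          rwa [he]
        · intro hx
          have he : x + (c - a) + -(c - a) = x := by abel
          exact ⟨x + (c - a), hup₁ x hx _ (le_add_of_nonneg_right hδ.le), he⟩
      rw [hg₁] at hmem
      simp only [Set.mem_singleton_iff, neg_eq_zero, sub_eq_zero] at hmem
      exact absurd hmem.symm hac.ne
    obtain ⟨b, hb, hs⟩ := hex
    have he : b + (c - a) + (a - b) = c := by abel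
    exact ⟨b + (c - a), hs, a - b, ⟨a, ha, b, hb, rfl⟩, he⟩
end

section
/- Let G be a linearly ordered abelian group and S₁, S₂ final segments of G with 𝒢(S₁) ⊊ 𝒢(S₂) (strict inclusion of invariance groups). Then S₁ + (S₂ − S₁ᶜ) = S₂. -/
open Pointwise

lemma neg_mem_invGrp {G : Type*} [AddCommGroup G] [LinearOrder G] [IsOrderedAddMonoid G] (M : Set G) (γ : G)
    (h : γ ∈ invGrp M) : -γ ∈ invGrp M := by
  have h2 := congrArg (Set.image (fun m => m + -γ)) h
  rw [Set.image_image] at h2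
  simp only [add_neg_cancel_right] at h2
  simpa [invGrp] using h2.symm

/-- If `S₁, S₂` are final segments with `S₁` nonprincipal and `𝒢(S₁) ⊊ 𝒢(S₂)`, then
`S₁ + (S₂ - S₁ᶜ) = S₂`. -/
theorem add_sub_compl_eq_of_invGrp_lt {G : Type*} [AddCommGroup G] [LinearOrder G] [IsOrderedAddMonoid G]
    (S₁ S₂ : Set G) (h₁ : IsFinalSegment S₁) (h₂ : IsFinalSegment S₂)
    (hnp₁ : ∀ t ∈ S₁, ∃ s ∈ S₁, s < t)
    (hlt : invGrp S₁ ⊂ invGrp S₂) :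
    S₁ + (S₂ - S₁ᶜ) = S₂ := by
  obtain ⟨γ, hγ₂, hγ₁⟩ := Set.exists_of_ssubset hlt
  have h0 : (0 : G) ∈ invGrp S₁ := by simp [invGrp]
  obtain ⟨δ, hδpos, hδ₂, hδ₁⟩ : ∃ δ : G, 0 < δ ∧ δ ∈ invGrp S₂ ∧ δ ∉ invGrp S₁ := by
    rcases lt_trichotomy γ 0 with h | h | h
    · exact ⟨-γ, neg_pos.mpr h, neg_mem_invGrp _ _ hγ₂,
        fun hc => hγ₁ (by simpa using neg_mem_invGrp _ _ hc)⟩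
    · exact absurd (h ▸ h0) hγ₁
    · exact ⟨γ, h, hγ₂, hγ₁⟩
  -- S₁ + δ is a proper subset of S₁
  have hsub' : (fun m => m + δ) '' S₁ ⊆ S₁ := by
    rintro _ ⟨x, hx, rfl⟩
    exact h₁.2.2 x hx _ (le_add_of_nonneg_right hδpos.le)
  obtain ⟨a, ha, hna⟩ : ∃ a ∈ S₁, a ∉ (fun m => m + δ) '' S₁ :=
    Set.exists_of_ssubset (ssubset_of_subset_of_ne hsub' hδ₁)
  have hb : a - δ ∉ S₁ := fun hc => hna ⟨a - δ, hc, by simp⟩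
  ext x
  constructor
  · intro hx
    rw [Set.mem_add] at hx
    obtain ⟨p, hp, q, hq, rfl⟩ := hx
    rw [Set.mem_sub] at hq
    obtain ⟨s, hs, b', hb', rfl⟩ := hq
    have hblt : b' < p := lt_of_not_ge fun h => hb' (h₁.2.2 p hp b' h)
    have heq : s + (p - b') = p + (s - b') := by abel
    exact h₂.2.2 s hs _ (heq ▸ le_add_of_nonneg_right (sub_nonneg.mpr hblt.le))
  · intro hx
    rw [← hδ₂] at hx
    obtain ⟨t, ht, rfl⟩ := hx
    rw [Set.mem_add]
    refine ⟨a, ha, t - (a - δ), ?_, by abel⟩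
    rw [Set.mem_sub]
    exact ⟨t, ht, a - δ, hb, rfl⟩
end

section
/- Let G be a linearly ordered abelian group, S a final segment, and H a convex subgroup of G with 𝒢(S) ⊊ H. Then the image S/H of S under the quotient map G → G/H (with the induced linear order on G/H) is a principal final segment of G/H, i.e., has a smallest element. -/
/-- Let `S` be a final segment and `H` a convex subgroup with `𝒢(S) ⊊ H`. Then the
image `S/H` of `S` in the ordered quotient `G/H` is a principal final segment, i.e. it
has a smallest element: there exists `α ∈ S` whose coset is a smallest element of
`S/H`; in terms of representatives, `α/H ≤ β/H` (i.e. `∃ h ∈ H, α + h ≤ β`) for all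
`β ∈ S`. -/
theorem quotient_principal_of_invGrp_lt {G : Type*} [AddCommGroup G] [LinearOrder G] [IsOrderedAddMonoid G]
    (S : Set G) (hS : IsFinalSegment S) (H : AddSubgroup G)
    (hconv : ∀ a ∈ H, ∀ b ∈ H, ∀ c : G, a ≤ c → c ≤ b → c ∈ H)
    (hlt : invGrp S ⊂ (H : Set G)) :
    ∃ α ∈ S, ∀ β ∈ S, ∃ h ∈ H, α + h ≤ β := by
  obtain ⟨hsub, hne⟩ := hlt
  obtain ⟨h₀, h₀H, h₀inv⟩ : ∃ h₀, h₀ ∈ (H : Set G) ∧ h₀ ∉ invGrp S := by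
    by_contra hc
    push_neg at hc
    exact hne fun x hx => hc x hx
  -- invGrp is closed under negation
  have neg_inv : ∀ γ : G, γ ∈ invGrp S → -γ ∈ invGrp S := by
    intro γ hγ
    have hγ' : (fun m => m + γ) '' S = S := hγ
    show (fun m => m + -γ) '' S = S
    calc (fun m => m + -γ) '' S = (fun m => m + -γ) '' ((fun m => m + γ) '' S) := by
          rw [hγ']
      _ = S := by
          rw [Set.image_image]
          simp only [add_neg_cancel_right, Set.image_id']
  -- produce a positive g ∈ H, g ∉ invGrp S
  obtain ⟨g, gH, ginv, gpos⟩ : ∃ g : G, g ∈ H ∧ g ∉ invGrp S ∧ 0 < g := by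
    rcases lt_trichotomy h₀ 0 with h | h | h
    · refine ⟨-h₀, neg_mem h₀H, fun hc => h₀inv ?_, neg_pos.mpr h⟩
      simpa using neg_inv _ hc
    · exact absurd (by simp [invGrp, h, Set.image_id']) h₀inv
    · exact ⟨h₀, h₀H, h₀inv, h⟩
  -- S + g ⊆ S
  have himg : (fun m => m + g) '' S ⊆ S := by
    rintro _ ⟨s, hs, rfl⟩
    exact hS.2.2 s hs _ (le_add_of_nonneg_right gpos.le)
  obtain ⟨α, hαS, hα⟩ : ∃ α ∈ S, α ∉ (fun m => m + g) '' S := by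
    by_contra hc
    push_neg at hc
    exact ginv (le_antisymm himg hc)
  refine ⟨α, hαS, fun β hβ => ⟨-g, neg_mem gH, ?_⟩⟩
  by_contra hc
  push_neg at hc
  have hβle : β ≤ α - g := by rw [sub_eq_add_neg]; exact hc.le
  have : α - g ∈ S := hS.2.2 β hβ _ hβle
  exact hα ⟨α - g, this, sub_add_cancel α g⟩
end
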